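/- arXiv:1503.02753 — 5 statements merged into one kernel-verified Lean document; each statement's English description precedes it below -/
import Mathlib

section
/- Let Q ∈ ℝ^{n×n} be symmetric positive definite, A ∈ ℝ^{n×n} nonsingular, b ∈ ℝⁿ. If u ∈ ℝⁿ satisfies (AᵀQA − I)u⁺ + u + Aᵀb = 0, then the point Au⁺ minimizes the function x ↦ (1/2)xᵀQx + xᵀb over the simplicial cone A·ℝⁿ₊. -/
noncomputable section

/-- `E n` is the n-dimensional Euclidean space over ℝ. -/
abbrev E (n : ℕ) := EuclideanSpace ℝ (Fin n)

variable {n : ℕ}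

/-- componentwise positive part `x⁺` -/
def posPart (x : E n) : E n := WithLp.toLp 2 (fun i => max (x i) 0)

/-- componentwise negative part `x⁻` -/
def negPart (x : E n) : E n := WithLp.toLp 2 (fun i => max (-(x i)) 0)

/-- the 0-1 vector `sgn(x⁺)` indicating positive components of `x` -/
def sgnPos (x : E n) : Fin n → ℝ := fun i => if 0 < x i then 1 else 0

/-- matrix-vector multiplication on Euclidean space -/
def mulV (M : Matrix (Fin n) (Fin n) ℝ) (x : E n) : E n := Matrix.toEuclideanLin M x

/-- operator norm of a matrix induced by the Euclidean norm -/
def opN (M : Matrix (Fin n) (Fin n) ℝ) : ℝ :=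
  ‖LinearMap.toContinuousLinearMap (Matrix.toEuclideanLin M)‖

/-- the nonnegative orthant ℝⁿ₊ -/
def nonnegOrthant (n : ℕ) : Set (E n) := {x | ∀ i, 0 ≤ x i}

/-- the simplicial cone A·ℝⁿ₊ -/
def simplicialCone (A : Matrix (Fin n) (Fin n) ℝ) : Set (E n) :=
  {y | ∃ x ∈ nonnegOrthant n, y = mulV A x}

/-- the dual cone K* of a set K -/
def dualCone (K : Set (E n)) : Set (E n) := {y | ∀ x ∈ K, 0 ≤ (inner ℝ y x : ℝ)}

lemma inner_eq_dot (x y : E n) : (inner ℝ x y : ℝ) = dotProduct x.ofLp y.ofLp := by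
  simp [PiLp.inner_apply, dotProduct, mul_comm]

theorem stmt4 (Q A : Matrix (Fin n) (Fin n) ℝ) (hQ : Q.PosDef) (hA : IsUnit A.det)
    (b u : E n)
    (hu : mulV (A.transpose * Q * A - 1) (posPart u) + u + mulV A.transpose b = 0) :
    mulV A (posPart u) ∈ simplicialCone A ∧
    ∀ y ∈ simplicialCone A,
      (1/2 : ℝ) * (inner ℝ (mulV A (posPart u)) (mulV Q (mulV A (posPart u))) : ℝ) +
          (inner ℝ (mulV A (posPart u)) b : ℝ) ≤
        (1/2 : ℝ) * (inner ℝ y (mulV Q y) : ℝ) + (inner ℝ y b : ℝ) := by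
  set v : E n := posPart u with hv
  refine ⟨⟨v, fun i => le_max_right _ _, rfl⟩, ?_⟩
  rintro _ ⟨w, hw, rfl⟩
  -- work with mulVec / dotProduct
  set x : Fin n → ℝ := A.mulVec v with hxdef
  set y : Fin n → ℝ := A.mulVec w with hydef
  set bb : Fin n → ℝ := (fun i => b i) with hbb
  set g : Fin n → ℝ := Q.mulVec x + bb with hgdef
  have hatg : A.transpose.mulVec g = fun i => max (-(u i)) 0 := by
    funext i
    have hcoord := congrFun (congrArg (fun (z : E n) => (z : Fin n → ℝ)) hu) i
    have h1 : mulV (A.transpose * Q * A - 1) v i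
        = A.transpose.mulVec (Q.mulVec x) i - v i := by
      show ((A.transpose * Q * A - 1).mulVec v) i = _
      rw [Matrix.sub_mulVec, Matrix.one_mulVec]
      simp only [Pi.sub_apply, ← Matrix.mulVec_mulVec]
      rfl
    have h2 : mulV A.transpose b i = A.transpose.mulVec b i := rfl
    have hE : mulV (A.transpose * Q * A - 1) v i + u i + mulV A.transpose b i = 0 := hcoord
    rw [h1, h2] at hE
    have : A.transpose.mulVec (Q.mulVec x + bb) i
        = A.transpose.mulVec (Q.mulVec x) i + A.transpose.mulVec b i := by
      rw [Matrix.mulVec_add]; rfl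
    rw [hgdef, this]
    have hvi : v i = max (u i) 0 := rfl
    have : max (u i) 0 - u i = max (-(u i)) 0 := by
      rcases le_or_gt (u i) 0 with h | h
      · rw [max_eq_right h, max_eq_left (by linarith)]; ring
      · rw [max_eq_left h.le, max_eq_right (by linarith)]; ring
    linarith [hE, this, hvi ▸ (rfl : v i = v i)]
  -- key scalar facts
  have hxg : dotProduct x g = dotProduct (v : Fin n → ℝ) (A.transpose.mulVec g) := by
    rw [Matrix.mulVec_transpose, dotProduct_comm, hxdef, Matrix.dotProduct_mulVec,
      dotProduct_comm]
  have hyg : dotProduct y g = dotProduct (w : Fin n → ℝ) (A.transpose.mulVec g) := by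
    rw [Matrix.mulVec_transpose, dotProduct_comm, hydef, Matrix.dotProduct_mulVec,
      dotProduct_comm]
  have hvg : dotProduct (v : Fin n → ℝ) (A.transpose.mulVec g) = 0 := by
    rw [hatg]
    apply Finset.sum_eq_zero
    intro i _
    show max (u i) 0 * max (-(u i)) 0 = 0
    rcases le_or_gt (u i) 0 with h | h
    · rw [max_eq_right h]; ring
    · rw [max_eq_right (by linarith : -(u i) ≤ 0)]; ring
  have hwg : 0 ≤ dotProduct (w : Fin n → ℝ) (A.transpose.mulVec g) := by
    rw [hatg]
    apply Finset.sum_nonneg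
    intro i _
    exact mul_nonneg (hw i) (le_max_right _ _)
  -- symmetry of Q
  have hsym : dotProduct y (Q.mulVec x) = dotProduct x (Q.mulVec y) := by
    rw [Matrix.dotProduct_mulVec, ← Matrix.mulVec_transpose]
    have : Q.transpose = Q := by
      have := hQ.isHermitian
      simpa [Matrix.IsHermitian, Matrix.conjTranspose_eq_transpose_of_trivial] using this
    rw [this, dotProduct_comm]
  -- positive semidefiniteness
  have hpsd : 0 ≤ dotProduct (y - x) (Q.mulVec (y - x)) := by
    have := hQ.posSemidef.dotProduct_mulVec_nonneg (y - x)
    simpa using this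
  have hexp : dotProduct (y - x) (Q.mulVec (y - x))
      = dotProduct y (Q.mulVec y) - 2 * dotProduct y (Q.mulVec x)
        + dotProduct x (Q.mulVec x) := by
    rw [Matrix.mulVec_sub, sub_dotProduct, dotProduct_sub, dotProduct_sub,
      hsym]
    ring
  -- rewrite inner products
  have e1 : (inner ℝ (mulV A v) (mulV Q (mulV A v)) : ℝ) = dotProduct x (Q.mulVec x) := by
    rw [inner_eq_dot]; rfl
  have e2 : (inner ℝ (mulV A v) b : ℝ) = dotProduct x bb := by
    rw [inner_eq_dot]; rfl
  have e3 : (inner ℝ (mulV A w) (mulV Q (mulV A w)) : ℝ) = dotProduct y (Q.mulVec y) := by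
    rw [inner_eq_dot]; rfl
  have e4 : (inner ℝ (mulV A w) b : ℝ) = dotProduct y bb := by
    rw [inner_eq_dot]; rfl
  rw [e1, e2, e3, e4]
  have hxgs : dotProduct x g
      = dotProduct x (Q.mulVec x) + dotProduct x bb := by
    rw [hgdef, dotProduct_add]
  have hygs : dotProduct y g
      = dotProduct y (Q.mulVec x) + dotProduct y bb := by
    rw [hgdef, dotProduct_add]
  nlinarith [hpsd, hexp, hxg, hyg, hvg, hwg, hxgs, hygs]
end
end

section
/- Let Q ∈ ℝ^{n×n} be symmetric positive definite, A ∈ ℝ^{n×n} nonsingular, b ∈ ℝⁿ. If u ∈ ℝⁿ satisfies (AᵀQA − I)u⁺ + u + Aᵀb = 0, then QAu⁺ + b ∈ (A·ℝⁿ₊)* and ⟨QAu⁺ + b, Au⁺⟩ = 0. -/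
noncomputable section

variable {n : ℕ}

lemma mulV_apply' (M : Matrix (Fin n) (Fin n) ℝ) (x : E n) (i : Fin n) :
    mulV M x i = ∑ j, M i j * x j := by
  simp [mulV, Matrix.toEuclideanLin_apply, Matrix.mulVec, dotProduct]

lemma inner_mulV (M : Matrix (Fin n) (Fin n) ℝ) (y x : E n) :
    (inner ℝ y (mulV M x) : ℝ) = inner ℝ (mulV M.transpose y) x := by
  simp only [PiLp.inner_apply, RCLike.inner_apply, conj_trivial, mulV_apply',
    Matrix.transpose_apply, Finset.mul_sum, Finset.sum_mul]
  rw [Finset.sum_comm]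
  exact Finset.sum_congr rfl fun j _ => Finset.sum_congr rfl fun i _ => by ring

lemma mulV_mul (M N : Matrix (Fin n) (Fin n) ℝ) (x : E n) :
    mulV (M * N) x = mulV M (mulV N x) := by
  ext i
  simp only [mulV_apply', Matrix.mul_apply, Finset.sum_mul]
  rw [Finset.sum_comm]
  exact Finset.sum_congr rfl fun k _ => by rw [Finset.mul_sum]; exact Finset.sum_congr rfl fun j _ => by ring

lemma key (Q A : Matrix (Fin n) (Fin n) ℝ) (b u : E n)
    (hu : mulV (A.transpose * Q * A - 1) (posPart u) + u + mulV A.transpose b = 0) :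
    mulV A.transpose (mulV Q (mulV A (posPart u)) + b) = negPart u := by
  have h1 : mulV (A.transpose * Q * A - 1) (_root_.posPart u)
      = mulV A.transpose (mulV Q (mulV A (_root_.posPart u))) - _root_.posPart u := by
    have hs : mulV (A.transpose * Q * A - 1) (_root_.posPart u)
        = mulV (A.transpose * Q * A) (_root_.posPart u) - mulV 1 (_root_.posPart u) := by
      simp [mulV, map_sub]
    rw [hs, mulV_mul, mulV_mul]
    have h1x : mulV (1 : Matrix (Fin n) (Fin n) ℝ) (_root_.posPart u) = _root_.posPart u := by
      ext i
      simp [mulV_apply', Matrix.one_apply]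
    rw [h1x]
  have h2 : mulV A.transpose (mulV Q (mulV A (_root_.posPart u)) + b)
      = mulV A.transpose (mulV Q (mulV A (_root_.posPart u))) + mulV A.transpose b := by
    simp [mulV]
  rw [h2]
  have h3 := hu
  rw [h1] at h3
  ext i
  have h4 := congrArg (fun v : E n => v i) h3
  simp only [PiLp.add_apply, PiLp.sub_apply, PiLp.zero_apply] at h4
  have hpos : _root_.posPart u i = max (u i) 0 := rfl
  have hneg : _root_.negPart u i = max (-(u i)) 0 := rfl
  have hkey : max (u i) 0 - u i = max (-(u i)) 0 := by
    rcases le_total (u i) 0 with h | h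
    · rw [max_eq_right h, max_eq_left (by linarith)]; ring
    · rw [max_eq_left h, max_eq_right (by linarith)]; ring
  simp only [PiLp.add_apply]
  rw [hneg]
  rw [hpos] at h4
  linarith

theorem stmt5 (Q A : Matrix (Fin n) (Fin n) ℝ) (hQ : Q.PosDef) (hA : IsUnit A.det)
    (b u : E n)
    (hu : mulV (A.transpose * Q * A - 1) (posPart u) + u + mulV A.transpose b = 0) :
    mulV Q (mulV A (posPart u)) + b ∈ dualCone (simplicialCone A) ∧
      (inner ℝ (mulV Q (mulV A (posPart u)) + b) (mulV A (posPart u)) : ℝ) = 0 := by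
  have hk := key Q A b u hu
  constructor
  · rintro y ⟨x, hx, rfl⟩
    rw [inner_mulV, hk, PiLp.inner_apply]
    apply Finset.sum_nonneg
    intro i _
    simp only [RCLike.inner_apply, conj_trivial]
    exact mul_nonneg (hx i) (le_max_right _ _)
  · rw [inner_mulV, hk, PiLp.inner_apply]
    apply Finset.sum_eq_zero
    intro i _
    simp only [RCLike.inner_apply, conj_trivial]
    have : _root_.negPart u i * _root_.posPart u i = 0 := by
      rcases le_total (u i) 0 with h | h
      · have hp : _root_.posPart u i = 0 := max_eq_right h
        rw [hp, mul_zero]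
      · have hn : _root_.negPart u i = 0 := max_eq_right (neg_nonpos.mpr h)
        rw [hn, zero_mul]
    exact (mul_comm _ _).trans this
end
end

section
/- Let Q ∈ ℝ^{n×n} be symmetric positive definite and A ∈ ℝ^{n×n} nonsingular. Then for every x ∈ ℝⁿ the matrix S(x) := (AᵀQA − I)·diag(sgn(x⁺)) + I is nonsingular. -/
noncomputable section

variable {n : ℕ}

open Matrix in
theorem stmt7 (Q A : Matrix (Fin n) (Fin n) ℝ) (hQ : Q.PosDef) (hA : IsUnit A.det)
    (x : E n) :
    IsUnit ((A.transpose * Q * A - 1) * Matrix.diagonal (sgnPos x) + 1).det := by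
  set d : Fin n → ℝ := sgnPos x with hd
  set S : Matrix (Fin n) (Fin n) ℝ := (A.transpose * Q * A - 1) * Matrix.diagonal d + 1 with hS
  have hidem : ∀ i, d i * d i = d i := by
    intro i; by_cases h : 0 < x i <;> simp [hd, sgnPos, h]
  have hAinj : Function.Injective A.mulVec :=
    Matrix.mulVec_injective_iff_isUnit.mpr ((Matrix.isUnit_iff_isUnit_det A).mpr hA)
  have key : ∀ v : Fin n → ℝ, S *ᵥ v = 0 → v = 0 := by
    intro v hv
    set u : Fin n → ℝ := (Matrix.diagonal d) *ᵥ v with hu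
    have hui : ∀ i, u i = d i * v i := by
      intro i; simp [hu, Matrix.mulVec_diagonal]
    have h1 : (A.transpose * Q * A) *ᵥ u - u + v = 0 := by
      have h2 := hv
      rw [hS, Matrix.add_mulVec, Matrix.one_mulVec, Matrix.sub_mul, Matrix.one_mul,
        Matrix.sub_mulVec] at h2
      rw [hu, Matrix.mulVec_mulVec]
      exact h2
    have hMv : (A.transpose * Q * A) *ᵥ u = u - v := by linear_combination h1
    have hdot : u ⬝ᵥ ((A.transpose * Q * A) *ᵥ u) = 0 := by
      rw [hMv, dotProduct_sub]
      have h3 : u ⬝ᵥ u = u ⬝ᵥ v := by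
        simp only [dotProduct, hui]
        congr 1; funext i; rw [mul_mul_mul_comm, hidem i, mul_assoc]
      rw [h3, sub_self]
    have hdot2 : (A *ᵥ u) ⬝ᵥ (Q *ᵥ (A *ᵥ u)) = 0 := by
      rw [← Matrix.mulVec_mulVec, ← Matrix.mulVec_mulVec, Matrix.dotProduct_mulVec,
        Matrix.vecMul_transpose] at hdot
      exact hdot
    have hAu : A *ᵥ u = 0 := by
      by_contra h
      have hpos := hQ.dotProduct_mulVec_pos h
      rw [show star (A *ᵥ u) = A *ᵥ u from rfl, hdot2] at hpos
      exact lt_irrefl 0 hpos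
    have hu0 : u = 0 := hAinj (by rw [hAu, Matrix.mulVec_zero])
    have h4 : u - v = 0 := by rw [← hMv, hu0, Matrix.mulVec_zero]
    rw [← sub_eq_zero.mp h4, hu0]
  have hinj : Function.Injective S.mulVec := by
    intro v w h
    have := key (v - w) (by rw [Matrix.mulVec_sub, h, sub_self])
    exact sub_eq_zero.mp this
  exact (Matrix.isUnit_iff_isUnit_det S).mp (Matrix.mulVec_injective_iff_isUnit.mp hinj)
end
end

section
/- Let D ∈ ℝ^{n×n} be a diagonal matrix with diagonal entries in {0,1}, Q symmetric positive definite, A nonsingular. If ((AᵀQA − I)D + I)u = 0 then u = 0. (Key step: AᵀQADu = (D − I)u forces ‖LᵀADu‖² = ⟨(D² − D)u, u⟩ = 0 where Q = LLᵀ.) -/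
noncomputable section

variable {n : ℕ}

theorem stmt8 (D Q A : Matrix (Fin n) (Fin n) ℝ)
    (hDdiag : ∀ i j, i ≠ j → D i j = 0) (hD01 : ∀ i, D i i = 0 ∨ D i i = 1)
    (hQ : Q.PosDef) (hA : IsUnit A.det) (u : E n)
    (h : mulV ((A.transpose * Q * A - 1) * D + 1) u = 0) : u = 0 := by
  set u' : Fin n → ℝ := fun i => u i with hu'
  have hmv : ((A.transpose * Q * A - 1) * D + 1).mulVec u' = 0 := by have := congrArg WithLp.ofLp h; exact this
  set v : Fin n → ℝ := D.mulVec u' with hv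
  have hvi : ∀ i, v i = D i i * u' i := by
    intro i
    simp only [hv, Matrix.mulVec, dotProduct]
    rw [Finset.sum_eq_single i]
    · intro b _ hb; rw [hDdiag i b (Ne.symm hb), zero_mul]
    · intro hi; exact absurd (Finset.mem_univ i) hi
  have key : (A.transpose * Q * A).mulVec v = v - u' := by
    have h1 : ((A.transpose * Q * A - 1) * D).mulVec u' + (1 : Matrix (Fin n) (Fin n) ℝ).mulVec u' = 0 := by
      rw [← Matrix.add_mulVec]; exact hmv
    rw [Matrix.one_mulVec, ← Matrix.mulVec_mulVec, Matrix.sub_mulVec, Matrix.one_mulVec] at h1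
    rw [← hv] at h1
    linear_combination (norm := module) h1
  have hvv : dotProduct v v = dotProduct v u' := by
    simp only [dotProduct]
    refine Finset.sum_congr rfl fun i _ => ?_
    rw [hvi i]
    rcases hD01 i with h0 | h0 <;> simp [h0]
  have hs0 : dotProduct v ((A.transpose * Q * A).mulVec v) = 0 := by
    rw [key, dotProduct_sub, hvv, sub_self]
  have hs : dotProduct v ((A.transpose * Q * A).mulVec v)
      = dotProduct (A.mulVec v) (Q.mulVec (A.mulVec v)) := by
    rw [← Matrix.mulVec_mulVec, ← Matrix.mulVec_mulVec, Matrix.dotProduct_mulVec,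
      Matrix.vecMul_transpose]
  have hAv : A.mulVec v = 0 := by
    by_contra hne
    have := hQ.dotProduct_mulVec_pos hne
    simp only [star_trivial] at this
    rw [hs] at hs0
    exact absurd hs0 (ne_of_gt this)
  have hv0 : v = 0 := by
    have h3 : (A⁻¹ * A).mulVec v = A⁻¹.mulVec 0 := by rw [← Matrix.mulVec_mulVec, hAv]
    simpa [Matrix.nonsing_inv_mul A hA] using h3
  have hu0 : u' = 0 := by
    have hk := key
    rw [hv0, Matrix.mulVec_zero] at hk
    simpa using hk.symm
  ext i
  exact congrFun hu0 i
end
end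

section
/- Let Q be symmetric positive definite, A nonsingular, b ∈ ℝⁿ. The semi-smooth Newton sequence defined by ((AᵀQA − I)·diag(sgn(x_k⁺)) + I)x_{k+1} = −Aᵀb is bounded for any starting point x₀ ∈ ℝⁿ. -/
noncomputable section

variable {n : ℕ}

open Matrix in
private lemma stmt14_isUnit (Q A : Matrix (Fin n) (Fin n) ℝ) (hQ : Q.PosDef) (hA : IsUnit A.det)
    (d : Fin n → Bool) :
    IsUnit ((A.transpose * Q * A - 1) * Matrix.diagonal (fun i => if d i then (1:ℝ) else 0) + 1).det := by
  set D : Matrix (Fin n) (Fin n) ℝ := Matrix.diagonal (fun i => if d i then (1:ℝ) else 0) with hD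
  set M : Matrix (Fin n) (Fin n) ℝ := (A.transpose * Q * A - 1) * D + 1 with hM
  rw [isUnit_iff_ne_zero]
  intro hdet
  obtain ⟨v, hv0, hv⟩ := (Matrix.exists_mulVec_eq_zero_iff).2 hdet
  obtain ⟨u, hu⟩ : ∃ u : Fin n → ℝ, u = D.mulVec v := ⟨_, rfl⟩
  have hui : ∀ i, u i = (if d i then (1:ℝ) else 0) * v i := by
    intro i; rw [hu, hD, Matrix.mulVec_diagonal]
  have hMv : (A.transpose * Q * A).mulVec u - u + v = 0 := by
    have : M.mulVec v = (A.transpose * Q * A).mulVec u - u + v := by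
      rw [hM, Matrix.add_mulVec, Matrix.one_mulVec, ← Matrix.mulVec_mulVec,
        Matrix.sub_mulVec, Matrix.one_mulVec, ← hu]
    rw [← this, hv]
  have huu : u ⬝ᵥ u = u ⬝ᵥ v := by
    apply Finset.sum_congr rfl
    intro i _
    rcases Bool.eq_false_or_eq_true (d i) with h | h <;> simp [hui i, h]
  have hquad : u ⬝ᵥ ((A.transpose * Q * A).mulVec u) = 0 := by
    have h2 := congrArg (fun w => u ⬝ᵥ w) hMv
    simpa [dotProduct_add, dotProduct_sub, huu] using h2
  have hAu : A.mulVec u = 0 := by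
    by_contra hne
    have hpos := hQ.dotProduct_mulVec_pos hne
    rw [show star (A.mulVec u) = A.mulVec u from rfl] at hpos
    have heq : (A.mulVec u) ⬝ᵥ (Q.mulVec (A.mulVec u)) = u ⬝ᵥ ((A.transpose * Q * A).mulVec u) := by
      rw [show A.transpose * Q * A = A.transpose * (Q * A) from Matrix.mul_assoc _ _ _,
        ← Matrix.mulVec_mulVec, Matrix.dotProduct_mulVec u, Matrix.vecMul_transpose,
        ← Matrix.mulVec_mulVec]
    rw [heq, hquad] at hpos
    exact lt_irrefl 0 hpos
  have hu0 : u = 0 := by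
    have h1 : A⁻¹ * A = 1 := Matrix.nonsing_inv_mul A hA
    calc u = (A⁻¹ * A).mulVec u := by rw [h1, Matrix.one_mulVec]
      _ = A⁻¹.mulVec (A.mulVec u) := by rw [Matrix.mulVec_mulVec]
      _ = 0 := by rw [hAu, Matrix.mulVec_zero]
  rw [hu0] at hMv
  simp at hMv
  exact hv0 hMv

private lemma stmt14_mulV_mulV (M N : Matrix (Fin n) (Fin n) ℝ) (x : E n) :
    mulV M (mulV N x) = mulV (M * N) x := by
  simp only [mulV, Matrix.toEuclideanLin_apply, WithLp.ofLp_toLp, Matrix.mulVec_mulVec]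

private lemma stmt14_mulV_one (x : E n) : mulV 1 x = x := by
  simp only [mulV, Matrix.toEuclideanLin_apply, Matrix.one_mulVec, WithLp.toLp_ofLp]

theorem stmt14 (Q A : Matrix (Fin n) (Fin n) ℝ) (hQ : Q.PosDef) (hA : IsUnit A.det)
    (b : E n) (x : ℕ → E n)
    (hrec : ∀ k, mulV ((A.transpose * Q * A - 1) * Matrix.diagonal (sgnPos (x k)) + 1)
        (x (k + 1)) = -(mulV A.transpose b)) :
    ∃ C : ℝ, ∀ k, ‖x k‖ ≤ C := by
  set Md : (Fin n → Bool) → Matrix (Fin n) (Fin n) ℝ := fun d =>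
    (A.transpose * Q * A - 1) * Matrix.diagonal (fun i => if d i then (1:ℝ) else 0) + 1 with hMd
  set g : (Fin n → Bool) → E n := fun d => mulV (Md d)⁻¹ (-(mulV A.transpose b)) with hg
  have key : ∀ k, x (k + 1) = g (fun i => decide (0 < x k i)) := by
    intro k
    set d : Fin n → Bool := fun i => decide (0 < x k i) with hd
    have hsgn : sgnPos (x k) = fun i => if d i then (1:ℝ) else 0 := by
      funext i; simp [sgnPos, hd]
    have h1 : mulV (Md d) (x (k + 1)) = -(mulV A.transpose b) := by
      have h := hrec k; rw [hsgn] at h; exact h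
    have h2 := congrArg (mulV (Md d)⁻¹) h1
    rw [stmt14_mulV_mulV, Matrix.nonsing_inv_mul _ (stmt14_isUnit Q A hQ hA d),
      stmt14_mulV_one] at h2
    rw [h2]
  have hne : (Finset.univ : Finset (Fin n → Bool)).Nonempty := Finset.univ_nonempty
  refine ⟨max ‖x 0‖ (Finset.univ.sup' hne fun d => ‖g d‖), ?_⟩
  intro k
  cases k with
  | zero => exact le_max_left _ _
  | succ m =>
    refine le_trans ?_ (le_max_right _ _)
    rw [key m]
    exact Finset.le_sup' (fun d => ‖g d‖) (Finset.mem_univ _)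
end
end
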